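/- Decomposition of a bipartite unitary superoperator via rank-2 combinations: if U = Σᵢ λᵢ Λᵢ with λᵢ ≥ 0 (viewing Λᵢ = Aᵢ ⊗ Bᵢ), then Ũ := U ⊗ conj(U) = Σᵢ λᵢ² (Λᵢ ⊗ conj(Λᵢ)) + 2 Σ_{i>j} λᵢλⱼ (Π^{(+)}_{i,j} ⊗ conj(Π^{(+)}_{i,j}) − Π^{(−)}_{i,j} ⊗ conj(Π^{(−)}_{i,j})), where Π^{(±)}_{i,j} = (Λᵢ ± Λⱼ)/2. -/

import Mathlib

open Kronecker

private lemma swap_sum (K : ℕ) (g : Fin K → Fin K → ℂ) :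
    ∑ i, ∑ j ∈ Finset.Iio i, g i j = ∑ i, ∑ j ∈ Finset.Ioi i, g j i := by
  rw [Finset.sum_sigma', Finset.sum_sigma']
  refine Finset.sum_nbij' (fun p => ⟨p.2, p.1⟩) (fun p => ⟨p.2, p.1⟩) ?_ ?_ ?_ ?_ ?_ <;> simp

private lemma key_split (K : ℕ) (f : Fin K → Fin K → ℂ) :
    ∑ i, ∑ j, f i j
      = ∑ i, f i i + ∑ i, ∑ j ∈ Finset.Iio i, (f i j + f j i) := by
  have h1 : ∀ i : Fin K, ∑ j, f i j
      = f i i + (∑ j ∈ Finset.Iio i, f i j + ∑ j ∈ Finset.Ioi i, f i j) := by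
    intro i
    have huniv : (Finset.univ : Finset (Fin K)) = (Finset.Iio i ∪ {i}) ∪ Finset.Ioi i := by
      ext j
      simp only [Finset.mem_univ, Finset.mem_union, Finset.mem_Iio, Finset.mem_singleton,
        Finset.mem_Ioi, true_iff, Fin.lt_def, Fin.ext_iff]
      omega
    have d1 : Disjoint (Finset.Iio i) ({i} : Finset (Fin K)) := by
      simp only [Finset.disjoint_left, Finset.mem_Iio, Finset.mem_singleton]
      exact fun a h => ne_of_lt h
    have d2 : Disjoint (Finset.Iio i ∪ {i}) (Finset.Ioi i) := by
      simp only [Finset.disjoint_left, Finset.mem_union, Finset.mem_Iio, Finset.mem_singleton,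
        Finset.mem_Ioi, Fin.lt_def, Fin.ext_iff]
      omega
    rw [huniv, Finset.sum_union d2, Finset.sum_union d1, Finset.sum_singleton]
    ring
  simp_rw [h1, Finset.sum_add_distrib]
  rw [swap_sum K (fun i j => f j i)]

private lemma scalar_key (K : ℕ) (l : Fin K → ℝ) (x y : Fin K → ℂ) :
    (∑ i, (l i : ℂ) * x i) * (∑ i, (l i : ℂ) * y i)
      = ∑ i, ((l i : ℂ))^2 * (x i * y i)
        + 2 * ∑ i, ∑ j ∈ Finset.Iio i, ((l i : ℂ) * l j) *
            ((1/2 * (x i + x j)) * (1/2 * (y i + y j))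
              - (1/2 * (x i - x j)) * (1/2 * (y i - y j))) := by
  rw [Finset.sum_mul_sum, key_split K (fun i j => ((l i : ℂ) * x i) * ((l j : ℂ) * y j))]
  congr 1
  · exact Finset.sum_congr rfl fun i _ => by ring
  · rw [Finset.mul_sum]
    refine Finset.sum_congr rfl fun i _ => ?_
    rw [Finset.mul_sum]
    exact Finset.sum_congr rfl fun j _ => by ring

/-- Decomposition of the superoperator `Ũ = U ⊗ conj U` of `U = Σᵢ λᵢ Λᵢ`
into diagonal terms and rank-2 combinations `Π^{(±)}_{i,j} = (Λᵢ ± Λⱼ)/2`. -/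
theorem stmt_15 (n K : ℕ) (l : Fin K → ℝ) (hl : ∀ i, 0 ≤ l i)
    (Λ : Fin K → Matrix (Fin n) (Fin n) ℂ)
    (U : Matrix (Fin n) (Fin n) ℂ) (hU : U = ∑ i, l i • Λ i) :
    U ⊗ₖ (U.map (starRingEnd ℂ))
      = (∑ i, (l i)^2 • (Λ i ⊗ₖ ((Λ i).map (starRingEnd ℂ))))
        + (2:ℝ) • ∑ i, ∑ j ∈ Finset.Iio i, (l i * l j) •
            (((1/2 : ℂ) • (Λ i + Λ j)) ⊗ₖ (((1/2 : ℂ) • (Λ i + Λ j)).map (starRingEnd ℂ))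
              - ((1/2 : ℂ) • (Λ i - Λ j)) ⊗ₖ (((1/2 : ℂ) • (Λ i - Λ j)).map (starRingEnd ℂ))) := by
  subst hU
  ext ⟨a, b⟩ ⟨c, d⟩
  simp only [Matrix.kroneckerMap_apply, Matrix.sum_apply, Matrix.smul_apply, Matrix.map_apply,
    Matrix.add_apply, Matrix.sub_apply, map_sum, map_smul, Complex.real_smul, smul_eq_mul,
    map_mul, map_add, map_sub, Complex.ofReal_mul, Complex.ofReal_pow]
  simp only [Complex.conj_ofReal]
  have := scalar_key K l (fun i => Λ i a c) (fun i => (starRingEnd ℂ) (Λ i b d))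
  have h2 : (starRingEnd ℂ) (1/2 : ℂ) = 1/2 := by
    rw [map_div₀, map_one, map_ofNat]
  rw [h2]
  push_cast
  rw [this]
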